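/- Let (X,d) be a geodesic metric space with a ccc geodesic bicombing σ and a basepoint o ∈ X. Then the map Σ : X × ℕ → X defined by Σ(x,n) := ρ_o^x(n) is a combing of X with basepoint o, and it is coherent with constant 0; in fact Σ(Σ(x,n),m) = Σ(x,m) for all x ∈ X and all natural numbers m ≤ n. -/

import Mathlib

open Metric Set

variable {X : Type*} [MetricSpace X]

/-- A geodesic bicombing on a metric space: a continuous choice of constant-speed
geodesics, parametrized on `[0,1]`. -/
def IsGeodesicBicombing (σ : X → X → ℝ → X) : Prop :=
  ContinuousOn (fun p : X × X × ℝ => σ p.1 p.2.1 p.2.2)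
    {p : X × X × ℝ | p.2.2 ∈ Set.Icc (0 : ℝ) 1} ∧
  (∀ x y : X, σ x y 0 = x) ∧
  (∀ x y : X, σ x y 1 = y) ∧
  (∀ x y : X, ∀ s ∈ Set.Icc (0 : ℝ) 1, ∀ t ∈ Set.Icc (0 : ℝ) 1,
    dist (σ x y s) (σ x y t) = |s - t| * dist x y)

/-- A bicombing is conical. -/
def IsConical (σ : X → X → ℝ → X) : Prop :=
  ∀ x y x' y' : X, ∀ t ∈ Set.Icc (0 : ℝ) 1,
    dist (σ x y t) (σ x' y' t) ≤ (1 - t) * dist x x' + t * dist y y'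

/-- A bicombing is consistent. -/
def IsConsistent (σ : X → X → ℝ → X) : Prop :=
  ∀ x y : X, ∀ s t l : ℝ, 0 ≤ s → s ≤ t → t ≤ 1 → l ∈ Set.Icc (0 : ℝ) 1 →
    σ (σ x y s) (σ x y t) l = σ x y ((1 - l) * s + l * t)

/-- A ccc bicombing: a geodesic bicombing that is consistent and conical. -/
def IsCCC (σ : X → X → ℝ → X) : Prop :=
  IsGeodesicBicombing σ ∧ IsConsistent σ ∧ IsConical σ

/-- A `σ`-ray: a unit-speed geodesic ray compatible with the bicombing `σ`
(encoded as a map on `ℝ` which is constant on `(-∞,0]`). -/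
def IsRay (σ : X → X → ℝ → X) (ξ : ℝ → X) : Prop :=
  (∀ t : ℝ, t ≤ 0 → ξ t = ξ 0) ∧
  (∀ s t : ℝ, 0 ≤ s → 0 ≤ t → dist (ξ s) (ξ t) = |s - t|) ∧
  (∀ t : ℝ, 0 ≤ t → ∀ s ∈ Set.Icc (0 : ℝ) 1, σ (ξ 0) (ξ t) s = ξ (s * t))

/-- Two rays are asymptotic: their distance at time `t` is uniformly bounded for `t ≥ 0`. -/
def Asymptotic (ξ ζ : ℝ → X) : Prop :=
  ∃ M : ℝ, ∀ t : ℝ, 0 ≤ t → dist (ξ t) (ζ t) ≤ M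

/-- A combing of a metric space with basepoint `o`. -/
def IsCombing (o : X) (c : X → ℕ → X) : Prop :=
  (∀ n : ℕ, c o n = o) ∧ (∀ x : X, c x 0 = o) ∧
  (∀ R : ℝ, 0 ≤ R → ∃ N : ℕ, ∀ n : ℕ, N ≤ n → ∀ x : X, dist o x ≤ R → c x n = x) ∧
  (∀ D : ℝ, 0 < D → ∃ C : ℝ, ∀ (x x' : X) (n n' : ℕ),
    dist x x' ≤ D → |(n : ℝ) - (n' : ℝ)| ≤ D → dist (c x n) (c x' n') ≤ C)

/-- A morphism of combed spaces. -/
def IsCombingMorphism {Y : Type*} [MetricSpace Y]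
    (cX : X → ℕ → X) (cY : Y → ℕ → Y) (α : X → Y) : Prop :=
  ∃ C : ℝ, ∀ (x : X) (n : ℕ), dist (α (cX x n)) (cY (α x) n) ≤ C

/-- A coarsely Lipschitz map. -/
def CoarselyLipschitz {Y : Type*} [MetricSpace Y] (f : X → Y) : Prop :=
  ∃ C : ℝ, 0 < C ∧ ∀ x x' : X, dist (f x) (f x') ≤ C * dist x x' + C

/-- Two maps are at finite distance from each other. -/
def FiniteDistance {Y : Type*} [MetricSpace Y] (f g : X → Y) : Prop :=
  ∃ C : ℝ, ∀ x : X, dist (f x) (g x) ≤ C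

/-- A geodesic metric space: every pair of points is joined by a (constant-speed) geodesic. -/
def IsGeodesicSpace (X : Type*) [MetricSpace X] : Prop :=
  ∀ x y : X, ∃ γ : ℝ → X, γ 0 = x ∧ γ 1 = y ∧
    ∀ s ∈ Set.Icc (0 : ℝ) 1, ∀ t ∈ Set.Icc (0 : ℝ) 1,
      dist (γ s) (γ t) = |s - t| * dist x y


open Classical in
/-- `ρ_o^x(r)`: the point at parameter `r` on the σ-geodesic from `o` to `x`
(reparametrized by arclength, stopping at `x`). -/
noncomputable def rho (σ : X → X → ℝ → X) (o x : X) (r : ℝ) : X :=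
  if x = o then o else σ o x (min (r / dist o x) 1)


section MyAux

variable {σ : X → X → ℝ → X}

private lemma my_min_lip (a b c : ℝ) : |min a c - min b c| ≤ |a - b| := by
  rw [abs_sub_le_iff]
  constructor <;>
  · rcases le_total a c with h1 | h1 <;> rcases le_total b c with h2 | h2 <;>
      simp [min_eq_left, min_eq_right, h1, h2] <;>
      rcases abs_cases (a - b) with ⟨h3, h4⟩ | ⟨h3, h4⟩ <;> linarith

private lemma my_dist_o_sigma (hσ : IsCCC σ) (o x : X) {t : ℝ}
    (ht : t ∈ Set.Icc (0:ℝ) 1) : dist o (σ o x t) = t * dist o x := by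
  obtain ⟨⟨_, h0, _, hd⟩, _, _⟩ := hσ
  have h := hd o x 0 ⟨le_rfl, zero_le_one⟩ t ht
  rw [h0] at h
  rw [h, zero_sub, abs_neg, abs_of_nonneg ht.1]

private lemma my_min_mem {r d : ℝ} (hr : 0 ≤ r) (hd : 0 < d) :
    min (r / d) 1 ∈ Set.Icc (0:ℝ) 1 :=
  ⟨le_min (div_nonneg hr hd.le) zero_le_one, min_le_right _ _⟩

private lemma my_rho_self (o : X) (r : ℝ) : rho σ o o r = o := by simp [rho]

private lemma my_rho_zero (hσ : IsCCC σ) (o x : X) : rho σ o x 0 = o := by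
  obtain ⟨⟨_, h0, _, _⟩, _, _⟩ := hσ
  by_cases hx : x = o
  · simp [rho, hx]
  · rw [rho, if_neg hx, zero_div, min_eq_left zero_le_one, h0]

private lemma my_rho_dist (hσ : IsCCC σ) (o x : X) {r : ℝ} (hr : 0 ≤ r) :
    dist o (rho σ o x r) = min r (dist o x) := by
  by_cases hx : x = o
  · simp [rho, hx, min_eq_right hr]
  · have hd : 0 < dist o x := dist_pos.2 fun h => hx h.symm
    rw [rho, if_neg hx, my_dist_o_sigma hσ o x (my_min_mem hr hd),
      min_mul_of_nonneg _ _ hd.le, div_mul_cancel₀ _ hd.ne', one_mul]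

private lemma my_rho_lip (hσ : IsCCC σ) (o x : X) {r r' : ℝ}
    (hr : 0 ≤ r) (hr' : 0 ≤ r') :
    dist (rho σ o x r) (rho σ o x r') ≤ |r - r'| := by
  by_cases hx : x = o
  · simp [rho, hx, abs_nonneg]
  · have hd : 0 < dist o x := dist_pos.2 fun h => hx h.symm
    obtain ⟨⟨_, _, _, hdd⟩, _, _⟩ := hσ
    rw [rho, if_neg hx, rho, if_neg hx,
      hdd o x _ (my_min_mem hr hd) _ (my_min_mem hr' hd)]
    calc |min (r / dist o x) 1 - min (r' / dist o x) 1| * dist o x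
        ≤ |r / dist o x - r' / dist o x| * dist o x := by
          exact mul_le_mul_of_nonneg_right (my_min_lip _ _ _) hd.le
      _ = |r - r'| := by
          rw [div_sub_div_same, abs_div, abs_of_pos hd, div_mul_cancel₀ _ hd.ne']

private lemma my_claim {r d d' : ℝ} (hr : 0 ≤ r) (hd : 0 < d) (hd' : 0 < d') :
    |min (r / d) 1 - min (r / d') 1| * d' ≤ |d - d'| := by
  rcases le_total d r with h1 | h1 <;> rcases le_total d' r with h2 | h2
  · rw [min_eq_right ((one_le_div hd).2 h1), min_eq_right ((one_le_div hd').2 h2)]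
    simpa using abs_nonneg (d - d')
  · rw [min_eq_right ((one_le_div hd).2 h1), min_eq_left ((div_le_one hd').2 h2)]
    have h3 : r / d' ≤ 1 := (div_le_one hd').2 h2
    have h4 : (1 - r / d') * d' = d' - r := by field_simp
    rw [abs_of_nonneg (sub_nonneg.2 h3), h4]
    have h5 : d' - d ≤ |d - d'| := by
      rw [abs_sub_comm]; exact le_abs_self _
    linarith
  · rw [min_eq_left ((div_le_one hd).2 h1), min_eq_right ((one_le_div hd').2 h2)]
    have h3 : r / d ≤ 1 := (div_le_one hd).2 h1
    have ha : r / d - 1 ≤ 0 := by linarith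
    have hb : (0:ℝ) ≤ d - d' := by linarith
    rw [abs_of_nonpos ha, neg_sub, abs_of_nonneg hb]
    have key : (d - r) * d' ≤ (d - d') * d := by nlinarith
    have e : (1 - r / d) * d' = (d - r) * d' / d := by field_simp
    rw [e, div_le_iff₀ hd]
    linarith
  · rw [min_eq_left ((div_le_one hd).2 h1), min_eq_left ((div_le_one hd').2 h2)]
    have e : r / d - r / d' = r * (d' - d) / (d * d') := by field_simp
    rw [e, abs_div, abs_mul, abs_of_nonneg hr, abs_of_pos (mul_pos hd hd')]
    have e2 : r * |d' - d| / (d * d') * d' = r / d * |d - d'| := by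
      rw [abs_sub_comm]; field_simp
    rw [e2]
    exact mul_le_of_le_one_left (abs_nonneg _) ((div_le_one hd).2 h1)

private lemma my_rho_conic (hσ : IsCCC σ) (o x x' : X) {r : ℝ} (hr : 0 ≤ r) :
    dist (rho σ o x r) (rho σ o x' r) ≤ 2 * dist x x' := by
  by_cases hx : x = o
  · rw [hx, my_rho_self, my_rho_dist hσ o x' hr]
    have := min_le_right r (dist o x')
    have : (0:ℝ) ≤ dist o x' := dist_nonneg
    linarith
  by_cases hx' : x' = o
  · rw [hx', dist_comm, my_rho_self, my_rho_dist hσ o x hr, dist_comm x o]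
    have := min_le_right r (dist o x)
    have : (0:ℝ) ≤ dist o x := dist_nonneg
    linarith
  have hd : 0 < dist o x := dist_pos.2 fun h => hx h.symm
  have hd' : 0 < dist o x' := dist_pos.2 fun h => hx' h.symm
  obtain ⟨⟨_, _, _, hdd⟩, _, hconic⟩ := hσ
  rw [rho, if_neg hx, rho, if_neg hx']
  set t := min (r / dist o x) 1 with ht
  set t' := min (r / dist o x') 1 with ht'
  have hmt : t ∈ Set.Icc (0:ℝ) 1 := my_min_mem hr hd
  have hmt' : t' ∈ Set.Icc (0:ℝ) 1 := my_min_mem hr hd'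
  have h1 : dist (σ o x t) (σ o x' t) ≤ dist x x' := by
    have := hconic o x o x' t hmt
    rw [dist_self] at this
    have h2 : t * dist x x' ≤ 1 * dist x x' :=
      mul_le_mul_of_nonneg_right hmt.2 dist_nonneg
    nlinarith
  have h2 : dist (σ o x' t) (σ o x' t') ≤ |dist o x - dist o x'| := by
    rw [hdd o x' t hmt t' hmt']
    exact my_claim hr hd hd'
  have h3 : |dist o x - dist o x'| ≤ dist x x' := by
    have := abs_dist_sub_le o o x
    calc |dist o x - dist o x'| = |dist x o - dist x' o| := by
          rw [dist_comm o x, dist_comm o x']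
      _ ≤ dist x x' := abs_dist_sub_le x x' o
  calc dist (σ o x t) (σ o x' t')
      ≤ dist (σ o x t) (σ o x' t) + dist (σ o x' t) (σ o x' t') := dist_triangle _ _ _
    _ ≤ 2 * dist x x' := by linarith

private lemma my_rho_rho (hσ : IsCCC σ) (o x : X) {s r : ℝ}
    (hs : 0 ≤ s) (hsr : s ≤ r) :
    rho σ o (rho σ o x r) s = rho σ o x s := by
  by_cases hx : x = o
  · simp [hx, my_rho_self]
  by_cases hs0 : s = 0
  · rw [hs0, my_rho_zero hσ, my_rho_zero hσ]
  have hspos : 0 < s := lt_of_le_of_ne hs (Ne.symm hs0)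
  have hrpos : 0 < r := lt_of_lt_of_le hspos hsr
  have hd : 0 < dist o x := dist_pos.2 fun h => hx h.symm
  obtain ⟨⟨_, h0, h1, hdd⟩, hcons, _⟩ := hσ
  by_cases hdr : dist o x ≤ r
  · have : rho σ o x r = x := by
      rw [rho, if_neg hx, min_eq_right ((one_le_div hd).2 hdr), h1]
    rw [this]
  push_neg at hdr
  have hry : rho σ o x r = σ o x (r / dist o x) := by
    rw [rho, if_neg hx, min_eq_left ((div_le_one hd).2 hdr.le)]
  have hmem : r / dist o x ∈ Set.Icc (0:ℝ) 1 :=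
    ⟨div_nonneg hrpos.le hd.le, (div_le_one hd).2 hdr.le⟩
  have hdy : dist o (σ o x (r / dist o x)) = r := by
    rw [my_dist_o_sigma ⟨⟨by assumption, h0, h1, hdd⟩, hcons, by assumption⟩ o x hmem,
      div_mul_cancel₀ _ hd.ne']
  have hy : σ o x (r / dist o x) ≠ o := by
    intro h
    rw [h, dist_self] at hdy
    linarith
  rw [hry, rho, if_neg hy, hdy, min_eq_left ((div_le_one hrpos).2 hsr)]
  have hc := hcons o x 0 (r / dist o x) (s / r) le_rfl hmem.1 hmem.2
    ⟨div_nonneg hs hrpos.le, (div_le_one hrpos).2 hsr⟩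
  rw [h0] at hc
  rw [hc]
  have e : (1 - s / r) * 0 + s / r * (r / dist o x) = s / dist o x := by
    field_simp; ring
  rw [e, rho, if_neg hx, min_eq_left]
  exact (div_le_one hd).2 (le_of_lt (lt_of_le_of_lt hsr hdr))

end MyAux

/-- **The map `Σ(x,n) := ρ_o^x(n)` is a coherent (with constant `0`) combing**
(from the proof of Theorem A via the Engel–Wulff construction). -/
theorem rho_is_coherent_combing
    (hgeo : IsGeodesicSpace X)
    (σ : X → X → ℝ → X) (hσ : IsCCC σ) (o : X) :
    IsCombing o (fun x n => rho σ o x (n : ℝ)) ∧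
    (∀ (x : X) (m n : ℕ), m ≤ n →
      dist (rho σ o (rho σ o x (n : ℝ)) (m : ℝ)) (rho σ o x (m : ℝ)) ≤ 0) ∧
    (∀ (x : X) (m n : ℕ), m ≤ n →
      rho σ o (rho σ o x (n : ℝ)) (m : ℝ) = rho σ o x (m : ℝ)) := by
  have key : ∀ (x : X) (m n : ℕ), m ≤ n →
      rho σ o (rho σ o x (n : ℝ)) (m : ℝ) = rho σ o x (m : ℝ) := by
    intro x m n hmn
    exact my_rho_rho hσ o x (Nat.cast_nonneg m) (by exact_mod_cast hmn)
  refine ⟨⟨fun n => my_rho_self o _, fun x => by simp only [Nat.cast_zero]; exact my_rho_zero hσ o x, ?_, ?_⟩,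
    fun x m n hmn => by rw [key x m n hmn, dist_self], key⟩
  · intro R hR
    refine ⟨⌈R⌉₊, fun n hn x hx => ?_⟩
    show rho σ o x (n : ℝ) = x
    by_cases hxo : x = o
    · rw [hxo, my_rho_self]
    · have hd : 0 < dist o x := dist_pos.2 fun h => hxo h.symm
      obtain ⟨⟨_, _, h1, _⟩, _, _⟩ := hσ
      have hnd : dist o x ≤ (n : ℝ) := by
        calc dist o x ≤ R := hx
          _ ≤ (⌈R⌉₊ : ℝ) := Nat.le_ceil R
          _ ≤ (n : ℝ) := by exact_mod_cast hn
      rw [rho, if_neg hxo, min_eq_right ((one_le_div hd).2 hnd), h1]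
  · intro D hD
    refine ⟨3 * D, fun x x' n n' hxx hnn => ?_⟩
    show dist (rho σ o x (n : ℝ)) (rho σ o x' (n' : ℝ)) ≤ 3 * D
    calc dist (rho σ o x (n : ℝ)) (rho σ o x' (n' : ℝ))
        ≤ dist (rho σ o x (n : ℝ)) (rho σ o x (n' : ℝ)) +
            dist (rho σ o x (n' : ℝ)) (rho σ o x' (n' : ℝ)) := dist_triangle _ _ _
      _ ≤ |(n : ℝ) - (n' : ℝ)| + 2 * dist x x' := by
          gcongr ?_ + ?_
          · exact my_rho_lip hσ o x (Nat.cast_nonneg n) (Nat.cast_nonneg n')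
          · exact my_rho_conic hσ o x x' (Nat.cast_nonneg n')
      _ ≤ D + 2 * D := by linarith
      _ = 3 * D := by ring
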